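/- Let X and Y be n-dimensional inner product spaces and L : X → Y a linear operator. Then for every ε > 0, the covering number of L satisfies √(det(L* L)) · (1/ε)^n ≤ C(ε, L). -/

import Mathlib

open Pointwise Metric
open scoped ENNReal

open Matrix Polynomial in
theorem detCov_det_one_add_of_isNilpotent {m : Type*} [Fintype m] [DecidableEq m]
    (M : Matrix m m ℝ) (h : IsNilpotent M) : (1 + M).det = 1 := by
  have hu := Matrix.isUnit_charpolyRev_of_isNilpotent h
  obtain ⟨r, hr, hcr⟩ := Polynomial.isUnit_iff.mp hu
  have h0 : Polynomial.eval 0 M.charpolyRev = 1 := Matrix.eval_charpolyRev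
  have hrev : M.charpolyRev = 1 := by
    rw [← hcr] at h0 ⊢
    simp only [Polynomial.eval_C] at h0
    rw [h0, Polynomial.C_1]
  have h1 : Polynomial.eval (-1) M.charpolyRev = (1 + M).det := by
    rw [Matrix.charpolyRev, ← Polynomial.coe_evalRingHom, RingHom.map_det]
    congr 1
    ext i j
    rcases eq_or_ne i j with rfl | hij
    · simp [Matrix.map_apply, Matrix.sub_apply, Matrix.smul_apply, Matrix.one_apply]
    · simp [Matrix.map_apply, Matrix.sub_apply, Matrix.smul_apply, Matrix.one_apply, hij]
  rw [hrev] at h1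
  simpa using h1.symm

/-- The ring hom turning a complex `ι × ι` matrix into a real `(ι × Fin 2) × (ι × Fin 2)`
matrix by replacing each entry by the `2 × 2` real matrix of multiplication by it. -/
noncomputable def detCovPhi (ι : Type*) [Fintype ι] [DecidableEq ι] :
    Matrix ι ι ℂ →+* Matrix (ι × Fin 2) (ι × Fin 2) ℝ :=
  ((Matrix.compRingEquiv ι (Fin 2) ℝ) : Matrix ι ι (Matrix (Fin 2) (Fin 2) ℝ) ≃+* _).toRingHom.comp
    ((Algebra.leftMulMatrix Complex.basisOneI).toRingHom.mapMatrix)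

open Matrix in
theorem detCov_det_phi {ι : Type*} [Fintype ι] [DecidableEq ι] (A : Matrix ι ι ℂ) :
    (detCovPhi ι A).det = Complex.normSq A.det := by
  refine Matrix.diagonal_transvection_induction
    (fun M => (detCovPhi ι M).det = Complex.normSq M.det) A (fun D _ => ?_) (fun t => ?_)
    (fun M N hM hN => ?_)
  · -- diagonal
    show ((detCovPhi ι) (diagonal D)).det = Complex.normSq (diagonal D).det
    have key : detCovPhi ι (diagonal D) =
        reindex (Equiv.prodComm (Fin 2) ι) (Equiv.prodComm (Fin 2) ι)
          (blockDiagonal fun a => Algebra.leftMulMatrix Complex.basisOneI (D a)) := by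
      ext ⟨a, k⟩ ⟨b, l⟩
      rcases eq_or_ne a b with rfl | hab
      · simp [detCovPhi, Matrix.blockDiagonal_apply, Matrix.diagonal_apply]
      · simp [detCovPhi, Matrix.blockDiagonal_apply, Matrix.diagonal_apply, hab, hab.symm]
    rw [key, Matrix.det_reindex_self, Matrix.det_blockDiagonal, Matrix.det_diagonal,
      map_prod Complex.normSq]
    refine Finset.prod_congr rfl fun i _ => ?_
    rw [← Algebra.norm_complex_apply, Algebra.norm_eq_matrix_det Complex.basisOneI]
  · -- transvection
    rcases t with ⟨i, j, hij, c⟩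
    set N := detCovPhi ι (Matrix.single i j c) with hN
    have hNN : N * N = 0 := by
      ext ⟨a, k⟩ ⟨b, l⟩
      rw [Matrix.mul_apply]
      refine Finset.sum_eq_zero ?_
      rintro ⟨x, s⟩ -
      rcases eq_or_ne x i with rfl | hx
      · have h0 : Matrix.single x j c a x = 0 := by
          simp only [Matrix.single, Matrix.of_apply, ite_eq_right_iff, and_imp]
          exact fun _ h => ((hij h.symm).elim)
        simp [hN, detCovPhi, h0, Matrix.single, hij.symm]
      · have h0 : Matrix.single i j c x b = 0 := by
          simp only [Matrix.single, Matrix.of_apply, ite_eq_right_iff, and_imp]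
          exact fun h _ => ((hx h.symm).elim)
        simp [hN, detCovPhi, h0, Matrix.single, hx.symm]
    have key : detCovPhi ι (Matrix.transvection i j c) = 1 + N := by
      rw [Matrix.transvection, map_add, _root_.map_one]
    show ((detCovPhi ι) (Matrix.TransvectionStruct.mk i j hij c).toMatrix).det =
      Complex.normSq (Matrix.TransvectionStruct.mk i j hij c).toMatrix.det
    rw [Matrix.TransvectionStruct.toMatrix_mk, key,
      detCov_det_one_add_of_isNilpotent _ ⟨2, by rw [pow_two, hNN]⟩,
      Matrix.det_transvection_of_ne _ _ hij]
    simp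
  · show ((detCovPhi ι) (M * N)).det = Complex.normSq (M * N).det
    rw [_root_.map_mul, Matrix.det_mul, Matrix.det_mul, _root_.map_mul]
    exact congrArg₂ (· * ·) hM hN

open Matrix in
theorem detCov_det_restrictScalars {V : Type*} [AddCommGroup V] [Module ℂ V] [Module ℝ V]
    [IsScalarTower ℝ ℂ V] [FiniteDimensional ℂ V] (f : V →ₗ[ℂ] V) :
    LinearMap.det (f.restrictScalars ℝ) = Complex.normSq (LinearMap.det f) := by
  set m := Module.finrank ℂ V
  let b : Module.Basis (Fin m) ℂ V := Module.finBasis ℂ V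
  let b' : Module.Basis (Fin 2 × Fin m) ℝ V := Complex.basisOneI.smulTower b
  rw [← LinearMap.det_toMatrix b' (f.restrictScalars ℝ), ← LinearMap.det_toMatrix b f,
    ← detCov_det_phi]
  have key : LinearMap.toMatrix b' b' (f.restrictScalars ℝ) =
      reindex (Equiv.prodComm (Fin m) (Fin 2)) (Equiv.prodComm (Fin m) (Fin 2))
        (detCovPhi (Fin m) (LinearMap.toMatrix b b f)) := by
    ext ⟨k, a⟩ ⟨l, c⟩
    rw [LinearMap.toMatrix_apply]
    simp only [Matrix.reindex_apply, Equiv.prodComm_symm, Equiv.prodComm_apply, Prod.swap_prod_mk,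
      Matrix.submatrix_apply]
    rw [show (detCovPhi (Fin m) (LinearMap.toMatrix b b f)) (a, k) (c, l)
        = Algebra.leftMulMatrix Complex.basisOneI ((LinearMap.toMatrix b b f) a c) k l from rfl,
      Algebra.leftMulMatrix_eq_repr_mul]
    rw [Module.Basis.smulTower_repr]
    simp only [LinearMap.coe_restrictScalars]
    rw [show b' (l, c) = Complex.basisOneI l • b c from Module.Basis.smulTower_apply _ _ _,
      _root_.map_smul, _root_.map_smul]
    simp only [Finsupp.smul_apply, smul_eq_mul, LinearMap.toMatrix_apply, mul_comm]
  rw [key, Matrix.det_reindex_self]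

theorem detCov_le_coe_sInf {S : Set ℕ∞} {c : ℝ≥0∞} (h : ∀ a ∈ S, c ≤ (a : ℝ≥0∞)) :
    c ≤ ((sInf S : ℕ∞) : ℝ≥0∞) := by
  rcases Set.eq_empty_or_nonempty S with rfl | hS
  · simp
  · exact h _ (csInf_mem hS)

/-- The covering number of an operator `L`: the minimal number `n` of points
`y₁,…,yₙ ∈ Y` such that `L(B_X)` is covered by the translates `yⱼ + ε • B_Y`. -/
noncomputable def covN {X Y : Type*} [SeminormedAddCommGroup X] [SeminormedAddCommGroup Y]
    [NormedSpace ℝ Y] (ε : ℝ) (L : X → Y) : ℕ∞ :=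
  sInf {n : ℕ∞ | ∃ (k : ℕ) (y : Fin k → Y), (k : ℕ∞) = n ∧
    L '' closedBall 0 1 ⊆ ⋃ j, (y j +ᵥ ε • closedBall (0 : Y) 1)}

theorem det_le_covN {X Y : Type*} [NormedAddCommGroup X] [InnerProductSpace ℂ X]
    [NormedAddCommGroup Y] [InnerProductSpace ℂ Y]
    [FiniteDimensional ℂ X] [FiniteDimensional ℂ Y] (n : ℕ)
    (hX : Module.finrank ℂ X = n) (hY : Module.finrank ℂ Y = n)
    (L : X →ₗ[ℂ] Y) (ε : ℝ) (hε : 0 < ε) :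
    ENNReal.ofReal (Real.sqrt (((LinearMap.adjoint L).comp L).det.re) * (1 / ε) ^ n)
      ≤ ((covN ε ⇑L : ℕ∞) : ℝ≥0∞) := by
  classical
  -- an isometry between `Y` and `X`
  let oX : OrthonormalBasis (Fin n) ℂ X := (stdOrthonormalBasis ℂ X).reindex (finCongr hX)
  let oY : OrthonormalBasis (Fin n) ℂ Y := (stdOrthonormalBasis ℂ Y).reindex (finCongr hY)
  let e : Y ≃ₗᵢ[ℂ] X := oY.repr.trans oX.repr.symm
  let f : X →ₗ[ℂ] X := (e.toLinearEquiv : Y →ₗ[ℂ] X) ∘ₗ L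
  -- the determinant identity
  have hadj : LinearMap.adjoint ((e.toLinearEquiv : Y →ₗ[ℂ] X)) =
      (e.symm.toLinearEquiv : X →ₗ[ℂ] Y) := by
    symm
    rw [LinearMap.eq_adjoint_iff]
    intro x y
    calc inner ℂ ((e.symm.toLinearEquiv : X →ₗ[ℂ] Y) x) y
        = inner (E := X) (𝕜 := ℂ) (e (e.symm x)) (e y) := by
          rw [LinearIsometryEquiv.inner_map_map]; rfl
      _ = inner ℂ x ((e.toLinearEquiv : Y →ₗ[ℂ] X) y) := by
          rw [e.apply_symm_apply]; rfl
  have hLL : (LinearMap.adjoint L).comp L = (LinearMap.adjoint f).comp f := by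
    show _ = (LinearMap.adjoint ((e.toLinearEquiv : Y →ₗ[ℂ] X) ∘ₗ L)).comp _
    rw [LinearMap.adjoint_comp, hadj]
    ext x
    simp [f]
  have hdetadj : (LinearMap.adjoint f).det = (starRingEnd ℂ) f.det := by
    let v := stdOrthonormalBasis ℂ X
    rw [← LinearMap.det_toMatrix v.toBasis, ← LinearMap.det_toMatrix v.toBasis f,
      LinearMap.toMatrix_adjoint, Matrix.det_conjTranspose]
    rfl
  have hdet : ((LinearMap.adjoint L).comp L).det = (Complex.normSq f.det : ℂ) := by
    rw [hLL, LinearMap.det_comp, hdetadj, mul_comm, Complex.mul_conj]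
  have hre : Real.sqrt (((LinearMap.adjoint L).comp L).det.re) = ‖f.det‖ := by
    rw [hdet, Complex.ofReal_re, Complex.normSq_eq_norm_sq, Real.sqrt_sq (norm_nonneg _)]
  rw [hre]
  simp only [covN]
  refine detCov_le_coe_sInf ?_
  rintro a ⟨k, y, rfl, hcov⟩
  -- `k ≥ 1` since the image of the unit ball is nonempty
  have hk1 : 1 ≤ k := by
    rcases Nat.eq_zero_or_pos k with rfl | h
    · exfalso
      have h0 : L 0 ∈ ⋃ j, (y j +ᵥ ε • closedBall (0 : Y) 1) :=
        hcov (Set.mem_image_of_mem _ (mem_closedBall_self zero_le_one))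
      rcases Set.mem_iUnion.mp h0 with ⟨j, -⟩
      exact j.elim0
    · exact h
  -- the translates are closed balls
  have hball : ∀ j : Fin k, (y j +ᵥ ε • closedBall (0 : Y) 1) = closedBall (y j) ε := by
    intro j
    rw [_root_.smul_closedBall _ _ zero_le_one, smul_zero, Real.norm_eq_abs, abs_of_pos hε, mul_one]
    rw [vadd_closedBall, vadd_eq_add, add_zero]
  -- transfer the cover along the isometry `e`
  have hcovX : ⇑f '' closedBall 0 1 ⊆ ⋃ j, closedBall (e (y j)) ε := by
    rintro - ⟨v, hv, rfl⟩
    have hmem := hcov (Set.mem_image_of_mem _ hv)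
    rcases Set.mem_iUnion.mp hmem with ⟨j, hj⟩
    rw [hball j, mem_closedBall] at hj
    refine Set.mem_iUnion.mpr ⟨j, ?_⟩
    rw [mem_closedBall]
    calc dist (f v) (e (y j)) = dist (e (L v)) (e (y j)) := rfl
      _ = dist (L v) (y j) := e.dist_map _ _
      _ ≤ ε := hj
  -- measure-theoretic argument
  borelize X
  let bR : Module.Basis (Fin (Module.finrank ℝ X)) ℝ X := Module.finBasis ℝ X
  let μ := bR.addHaar
  set B : Set X := closedBall 0 1 with hB
  have hμB0 : μ B ≠ 0 := (Metric.measure_closedBall_pos μ 0 one_pos).ne'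
  have hμBt : μ B ≠ ⊤ := MeasureTheory.measure_closedBall_lt_top.ne
  have himg : μ (⇑f '' B) = ENNReal.ofReal |LinearMap.det (f.restrictScalars ℝ)| * μ B := by
    simpa using μ.addHaar_image_linearMap (f.restrictScalars ℝ) B
  have hsum : μ (⇑f '' B) ≤
      ((k : ℝ≥0∞) * ENNReal.ofReal (ε ^ Module.finrank ℝ X)) * μ B := by
    refine (MeasureTheory.measure_mono hcovX).trans ((MeasureTheory.measure_iUnion_fintype_le μ _).trans ?_)
    have hone : ∀ j : Fin k, μ (closedBall (e (y j)) ε)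
        = ENNReal.ofReal (ε ^ Module.finrank ℝ X) * μ B :=
      fun j => μ.addHaar_closedBall' _ hε.le
    rw [Finset.sum_congr rfl fun j _ => hone j, Finset.sum_const, Finset.card_univ,
      Fintype.card_fin, nsmul_eq_mul, mul_assoc]
  have hkey : ENNReal.ofReal |LinearMap.det (f.restrictScalars ℝ)|
      ≤ (k : ℝ≥0∞) * ENNReal.ofReal (ε ^ Module.finrank ℝ X) :=
    (ENNReal.mul_le_mul_iff_left hμB0 hμBt).mp (himg ▸ hsum)
  have hd : Module.finrank ℝ X = 2 * n := by rw [finrank_real_of_complex, hX]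
  have habs : |LinearMap.det (f.restrictScalars ℝ)| = Complex.normSq f.det := by
    rw [detCov_det_restrictScalars, abs_of_nonneg (Complex.normSq_nonneg _)]
  have hreal : Complex.normSq f.det ≤ (k : ℝ) * ε ^ (2 * n) := by
    rw [habs, hd] at hkey
    rw [show (k : ℝ≥0∞) * ENNReal.ofReal (ε ^ (2 * n))
        = ENNReal.ofReal ((k : ℝ) * ε ^ (2 * n)) by
      rw [ENNReal.ofReal_mul (by positivity), ENNReal.ofReal_natCast]] at hkey
    exact (ENNReal.ofReal_le_ofReal_iff (by positivity)).mp hkey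
  -- final elementary inequality
  have habsle : ‖f.det‖ * (1 / ε) ^ n ≤ (k : ℝ) := by
    set t := ‖f.det‖ * (1 / ε) ^ n with ht
    have ht0 : 0 ≤ t := by positivity
    have hεn : (0 : ℝ) < ε ^ (2 * n) := by positivity
    have ht2 : t ^ 2 ≤ (k : ℝ) := by
      have hts : t ^ 2 = Complex.normSq f.det / ε ^ (2 * n) := by
        rw [ht, mul_pow, Complex.sq_norm, ← pow_mul, mul_comm n 2, one_div_pow, mul_one_div]
      rw [hts, div_le_iff₀ hεn]
      exact hreal
    have hk1' : (1 : ℝ) ≤ (k : ℝ) := by exact_mod_cast hk1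
    nlinarith [sq_nonneg (t - 1)]
  calc ENNReal.ofReal (‖f.det‖ * (1 / ε) ^ n)
      ≤ ENNReal.ofReal (k : ℝ) := ENNReal.ofReal_le_ofReal habsle
    _ = ((k : ℕ∞) : ℝ≥0∞) := by simp [ENNReal.ofReal_natCast]
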